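/- Let d ∈ ℕ, let M and K be symmetric real d×d matrices, let Δt > 0, and let U : ℕ → ℝ^d satisfy the leapfrog recursion M·(U(n+1) − 2·U(n) + U(n−1)) + Δt²·K·U(n) = 0 for all n ≥ 1. For n ≥ 0 define D(n) = (U(n+1) − U(n))/Δt and the discrete energy E(n) = (1/2)·⟨M·D(n), D(n)⟩ + (1/4)·⟨K·U(n+1), U(n+1)⟩ + (1/4)·⟨K·U(n), U(n)⟩ − (Δt²/4)·⟨K·D(n), D(n)⟩, where ⟨·,·⟩ is the Euclidean inner product on ℝ^d. Then E(n) = E(n−1) for every n ≥ 1. -/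

import Mathlib

open Matrix

lemma symm_dot {d : ℕ} (A : Matrix (Fin d) (Fin d) ℝ) (hA : A.IsSymm)
    (x y : Fin d → ℝ) : A.mulVec x ⬝ᵥ y = A.mulVec y ⬝ᵥ x := by
  rw [dotProduct_comm, dotProduct_mulVec, ← mulVec_transpose, hA.eq]

theorem leapfrog_energy_conservation
    (d : ℕ) (M K : Matrix (Fin d) (Fin d) ℝ)
    (hM : M.IsSymm) (hK : K.IsSymm)
    (Δt : ℝ) (hΔt : 0 < Δt)
    (U : ℕ → Fin d → ℝ)
    (hrec : ∀ n : ℕ, 1 ≤ n →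
      M.mulVec (U (n + 1) - (2 : ℝ) • U n + U (n - 1))
        + (Δt ^ 2) • K.mulVec (U n) = 0)
    (D : ℕ → Fin d → ℝ)
    (hD : ∀ n : ℕ, D n = Δt⁻¹ • (U (n + 1) - U n))
    (E : ℕ → ℝ)
    (hE : ∀ n : ℕ, E n =
      (1 / 2) * (M.mulVec (D n) ⬝ᵥ D n)
        + (1 / 4) * (K.mulVec (U (n + 1)) ⬝ᵥ U (n + 1))
        + (1 / 4) * (K.mulVec (U n) ⬝ᵥ U n)
        - (Δt ^ 2 / 4) * (K.mulVec (D n) ⬝ᵥ D n)) :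
    ∀ n : ℕ, 1 ≤ n → E n = E (n - 1) := by
  intro n hn
  obtain ⟨m, rfl⟩ : ∃ m, n = m + 1 := ⟨n - 1, (Nat.succ_pred_eq_of_pos hn).symm⟩
  have h1 := congrArg (fun v => v ⬝ᵥ (U (m + 2) - U m)) (hrec (m + 1) (by omega))
  simp only [Nat.add_sub_cancel] at h1 ⊢
  rw [hE, hE, hD, hD]
  simp only [mulVec_add, mulVec_sub, mulVec_smul, add_dotProduct, sub_dotProduct,
    smul_dotProduct, dotProduct_add, dotProduct_sub, dotProduct_smul, zero_dotProduct,
    smul_eq_mul] at h1 ⊢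
  have hne : Δt ≠ 0 := ne_of_gt hΔt
  have e1 := symm_dot M hM (U (m + 2)) (U (m + 1))
  have e2 := symm_dot M hM (U (m + 2)) (U m)
  have e3 := symm_dot M hM (U (m + 1)) (U m)
  have e4 := symm_dot K hK (U (m + 2)) (U (m + 1))
  have e5 := symm_dot K hK (U (m + 2)) (U m)
  have e6 := symm_dot K hK (U (m + 1)) (U m)
  simp only [show m + 1 + 1 = m + 2 from rfl] at *
  field_simp at h1 ⊢
  linear_combination 4*h1 - 4*e1 + 4*e2 - 4*e3 + (2*Δt^2)*e4 + (2*Δt^2)*e6
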